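/- Suppose k ≤ l ≤ n and k + l ≥ n. For A + b ∈ Graff(k,n) and B + c ∈ Graff(l,n), the relative volume (uniform probability) of Ψ₊(A+b) = {l-flats containing A+b} in Graff(l,n) equals the relative volume of Ψ₋(B+c) = {k-flats contained in B+c} in Graff(k,n), and the common value is (l+1)!(n−k)! ∏_{j=l−k+1}^{l+1} ω_j / ((n+1)!(l−k)! ∏_{j=n−k+1}^{n+1} ω_j), where ω_m = π^{m/2}/Γ(1+m/2) is the volume of the unit ball in ℝ^m. -/

import Mathlib

open scoped Real

/-- `ω m = π^{m/2} / Γ(1 + m/2)`, the volume of the unit ball in `ℝᵐ`. -/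
noncomputable def unitBallVol (m : ℕ) : ℝ :=
  Real.pi ^ ((m : ℝ) / 2) / Real.Gamma (1 + (m : ℝ) / 2)

/-- The volume of the Grassmannian `Gr(k,n)` with respect to its natural invariant
measure: `binom(n,k) ∏_{j=1}^n ω_j / (∏_{j=1}^k ω_j · ∏_{j=1}^{n−k} ω_j)`. -/
noncomputable def volGr (k n : ℕ) : ℝ :=
  (n.choose k : ℝ) * (∏ j ∈ Finset.Icc 1 n, unitBallVol j) /
    ((∏ j ∈ Finset.Icc 1 k, unitBallVol j) * (∏ j ∈ Finset.Icc 1 (n - k), unitBallVol j))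

lemma unitBallVol_pos (m : ℕ) : 0 < unitBallVol m := by
  unfold unitBallVol
  apply div_pos
  · exact Real.rpow_pos_of_pos Real.pi_pos _
  · apply Real.Gamma_pos_of_pos
    positivity

lemma P_pos (m : ℕ) : 0 < ∏ j ∈ Finset.Icc 1 m, unitBallVol j :=
  Finset.prod_pos fun j _ => unitBallVol_pos j

lemma prod_Icc_eq {a b : ℕ} (h : a ≤ b) :
    ∏ j ∈ Finset.Icc (a + 1) b, unitBallVol j =
      (∏ j ∈ Finset.Icc 1 b, unitBallVol j) / (∏ j ∈ Finset.Icc 1 a, unitBallVol j) := by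
  have h1 : Finset.Icc 1 b = Finset.Ioc 0 b := rfl
  have h2 : Finset.Icc 1 a = Finset.Ioc 0 a := rfl
  have h3 : Finset.Icc (a + 1) b = Finset.Ioc a b := by
    ext x; simp only [Finset.mem_Icc, Finset.mem_Ioc]; omega
  have key := Finset.prod_Ioc_consecutive unitBallVol (Nat.zero_le a) h
  rw [h1, h2, h3, ← key, mul_div_cancel_left₀]
  rw [← h2]
  exact (P_pos a).ne'

/-- For `k ≤ l ≤ n` with `k + l ≥ n`, `A + b ∈ Graff(k,n)` and
`B + c ∈ Graff(l,n)`, the relative volume of `Ψ₊(A+b) ≅ Gr(n−l,n−k)` in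
`Graff(l,n) ≅ Gr(l+1,n+1)` equals the relative volume of `Ψ₋(B+c) ≅ Graff(k,l) ≅
Gr(k+1,l+1)` in `Graff(k,n) ≅ Gr(k+1,n+1)`, the common value being
`(l+1)!(n−k)! ∏_{j=l−k+1}^{l+1} ω_j / ((n+1)!(l−k)! ∏_{j=n−k+1}^{n+1} ω_j)`. -/
theorem relative_volume_psi (k l n : ℕ) (hkl : k ≤ l) (hln : l ≤ n) (hnkl : n ≤ k + l) :
    volGr (n - l) (n - k) / volGr (l + 1) (n + 1) =
      ((l + 1).factorial : ℝ) * ((n - k).factorial : ℝ) *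
          (∏ j ∈ Finset.Icc (l - k + 1) (l + 1), unitBallVol j) /
        (((n + 1).factorial : ℝ) * ((l - k).factorial : ℝ) *
          (∏ j ∈ Finset.Icc (n - k + 1) (n + 1), unitBallVol j)) ∧
    volGr (k + 1) (l + 1) / volGr (k + 1) (n + 1) =
      ((l + 1).factorial : ℝ) * ((n - k).factorial : ℝ) *
          (∏ j ∈ Finset.Icc (l - k + 1) (l + 1), unitBallVol j) /
        (((n + 1).factorial : ℝ) * ((l - k).factorial : ℝ) *
          (∏ j ∈ Finset.Icc (n - k + 1) (n + 1), unitBallVol j)) := by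
  have h1 : (n - k) - (n - l) = l - k := by omega
  have h2 : (n + 1) - (l + 1) = n - l := by omega
  have h3 : (l + 1) - (k + 1) = l - k := by omega
  have h4 : (n + 1) - (k + 1) = n - k := by omega
  have hc1 : ((n - k).choose (n - l) : ℝ) =
      ((n - k).factorial : ℝ) / ((n - l).factorial * ((l - k).factorial)) := by
    rw [Nat.cast_choose ℝ (by omega : n - l ≤ n - k), h1]
  have hc2 : ((n + 1).choose (l + 1) : ℝ) =
      ((n + 1).factorial : ℝ) / ((l + 1).factorial * ((n - l).factorial)) := by
    rw [Nat.cast_choose ℝ (by omega : l + 1 ≤ n + 1), h2]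
  have hc3 : ((l + 1).choose (k + 1) : ℝ) =
      ((l + 1).factorial : ℝ) / ((k + 1).factorial * ((l - k).factorial)) := by
    rw [Nat.cast_choose ℝ (by omega : k + 1 ≤ l + 1), h3]
  have hc4 : ((n + 1).choose (k + 1) : ℝ) =
      ((n + 1).factorial : ℝ) / ((k + 1).factorial * ((n - k).factorial)) := by
    rw [Nat.cast_choose ℝ (by omega : k + 1 ≤ n + 1), h4]
  have hp1 := prod_Icc_eq (by omega : l - k ≤ l + 1)
  have hp2 := prod_Icc_eq (by omega : n - k ≤ n + 1)
  have f1 : ((l + 1).factorial : ℝ) ≠ 0 := Nat.cast_ne_zero.2 (Nat.factorial_ne_zero _)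
  have f2 : ((n - k).factorial : ℝ) ≠ 0 := Nat.cast_ne_zero.2 (Nat.factorial_ne_zero _)
  have f3 : ((n + 1).factorial : ℝ) ≠ 0 := Nat.cast_ne_zero.2 (Nat.factorial_ne_zero _)
  have f4 : ((l - k).factorial : ℝ) ≠ 0 := Nat.cast_ne_zero.2 (Nat.factorial_ne_zero _)
  have f5 : ((n - l).factorial : ℝ) ≠ 0 := Nat.cast_ne_zero.2 (Nat.factorial_ne_zero _)
  have f6 : ((k + 1).factorial : ℝ) ≠ 0 := Nat.cast_ne_zero.2 (Nat.factorial_ne_zero _)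
  have q1 := (P_pos (n - k)).ne'
  have q2 := (P_pos (n - l)).ne'
  have q3 := (P_pos (l - k)).ne'
  have q4 := (P_pos (l + 1)).ne'
  have q5 := (P_pos (n + 1)).ne'
  have q6 := (P_pos (k + 1)).ne'
  constructor
  · unfold volGr
    rw [h1, h2, hc1, hc2, hp1, hp2]
    generalize ((l + 1).factorial : ℝ) = F1 at *
    generalize ((n - k).factorial : ℝ) = F2 at *
    generalize ((n + 1).factorial : ℝ) = F3 at *
    generalize ((l - k).factorial : ℝ) = F4 at *
    generalize ((n - l).factorial : ℝ) = F5 at *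
    generalize (∏ j ∈ Finset.Icc 1 (n - k), unitBallVol j) = Q1 at *
    generalize (∏ j ∈ Finset.Icc 1 (n - l), unitBallVol j) = Q2 at *
    generalize (∏ j ∈ Finset.Icc 1 (l - k), unitBallVol j) = Q3 at *
    generalize (∏ j ∈ Finset.Icc 1 (l + 1), unitBallVol j) = Q4 at *
    generalize (∏ j ∈ Finset.Icc 1 (n + 1), unitBallVol j) = Q5 at *
    field_simp
  · unfold volGr
    rw [h3, h4, hc3, hc4, hp1, hp2]
    generalize ((l + 1).factorial : ℝ) = F1 at *
    generalize ((n - k).factorial : ℝ) = F2 at *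
    generalize ((n + 1).factorial : ℝ) = F3 at *
    generalize ((l - k).factorial : ℝ) = F4 at *
    generalize ((k + 1).factorial : ℝ) = F6 at *
    generalize (∏ j ∈ Finset.Icc 1 (n - k), unitBallVol j) = Q1 at *
    generalize (∏ j ∈ Finset.Icc 1 (l - k), unitBallVol j) = Q3 at *
    generalize (∏ j ∈ Finset.Icc 1 (l + 1), unitBallVol j) = Q4 at *
    generalize (∏ j ∈ Finset.Icc 1 (n + 1), unitBallVol j) = Q5 at *
    generalize (∏ j ∈ Finset.Icc 1 (k + 1), unitBallVol j) = Q6 at *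
    field_simp
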